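/- Suppose φ : ℝ^m → ℝ is differentiable, ȳ ∈ Δ_{m-1}, and for some direction d with ‖d‖ = √2 (of the form ±(e_i − e_j)) and some α with 0 < α ≤ ε it holds φ(ȳ + αd) > φ(ȳ) − γα². If ∇φ is Lipschitz continuous with constant L, then −∇φ(ȳ)ᵀd < (2L + γ)ε. -/

import Mathlib

open scoped RealInnerProductSpace

/-- The unit simplex in ℝ^m. -/
def unitSimplex (m : ℕ) : Set (EuclideanSpace ℝ (Fin m)) :=
  {y | (∀ i, 0 ≤ y i) ∧ ∑ i, y i = 1}

/-- Descent-type lemma with factor `L` instead of `L/2` (enough for our purposes). -/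
lemma descent_aux {m : ℕ} (φ : EuclideanSpace ℝ (Fin m) → ℝ)
    (G : EuclideanSpace ℝ (Fin m) → EuclideanSpace ℝ (Fin m))
    (hgrad : ∀ y, HasGradientAt φ (G y) y)
    (L : ℝ) (hL : 0 ≤ L) (hLip : ∀ u v, ‖G u - G v‖ ≤ L * ‖u - v‖)
    (y v : EuclideanSpace ℝ (Fin m)) :
    φ (y + v) - φ y - ⟪G y, v⟫ ≤ L * ‖v‖ ^ 2 := by
  set g : ℝ → ℝ := fun t => φ (y + t • v) - t * ⟪G y, v⟫ with hg
  have hderiv : ∀ t : ℝ, HasDerivAt g (⟪G (y + t • v), v⟫ - ⟪G y, v⟫) t := by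
    intro t
    have hc : HasDerivAt (fun t : ℝ => y + t • v) v t := by
      simpa using ((hasDerivAt_id t).smul_const v).const_add y
    have h1 : HasDerivAt (fun t : ℝ => φ (y + t • v)) ⟪G (y + t • v), v⟫ t := by
      have hphi := (hgrad (y + t • v)).hasFDerivAt
      have := hphi.comp_hasDerivAt t hc
      exact this
    have h2 : HasDerivAt (fun t : ℝ => t * ⟪G y, v⟫) ⟪G y, v⟫ t := by
      simpa using (hasDerivAt_id t).mul_const ⟪G y, v⟫
    exact h1.sub h2
  have hbound : ∀ t ∈ Set.Icc (0:ℝ) 1, ‖⟪G (y + t • v), v⟫ - ⟪G y, v⟫‖ ≤ L * ‖v‖ ^ 2 := by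
    intro t ht
    have h1 : ⟪G (y + t • v), v⟫ - ⟪G y, v⟫ = ⟪G (y + t • v) - G y, v⟫ := by
      rw [inner_sub_left]
    rw [h1]
    calc ‖⟪G (y + t • v) - G y, v⟫‖ ≤ ‖G (y + t • v) - G y‖ * ‖v‖ := norm_inner_le_norm _ _
      _ ≤ (L * ‖(y + t • v) - y‖) * ‖v‖ := by
          gcongr; exact hLip _ _
      _ = L * (|t| * ‖v‖) * ‖v‖ := by simp [norm_smul]
      _ ≤ L * (1 * ‖v‖) * ‖v‖ := by
          have habs : |t| ≤ 1 := abs_le.2 ⟨by linarith [ht.1], ht.2⟩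
          gcongr
      _ = L * ‖v‖ ^ 2 := by ring
  have key := Convex.norm_image_sub_le_of_norm_hasDerivWithin_le
    (f := g) (f' := fun t => ⟪G (y + t • v), v⟫ - ⟪G y, v⟫)
    (fun t ht => (hderiv t).hasDerivWithinAt) hbound (convex_Icc 0 1)
    (Set.left_mem_Icc.2 zero_le_one) (Set.right_mem_Icc.2 zero_le_one)
  have : ‖g 1 - g 0‖ ≤ L * ‖v‖ ^ 2 := by simpa using key
  have h0 : g 1 - g 0 = φ (y + v) - φ y - ⟪G y, v⟫ := by simp [hg]; ring
  calc φ (y + v) - φ y - ⟪G y, v⟫ = g 1 - g 0 := h0.symm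
    _ ≤ ‖g 1 - g 0‖ := le_abs_self _
    _ ≤ L * ‖v‖ ^ 2 := this

/-- if the line search fails along `d = ±(e_i - e_j)` (i.e.
`φ(ȳ + αd) > φ(ȳ) - γα²` for some `0 < α ≤ ε`) and `∇φ` is `L`-Lipschitz, then
`-∇φ(ȳ)ᵀd < (2L + γ)ε`. -/
theorem stmt_14 {m : ℕ} (φ : EuclideanSpace ℝ (Fin m) → ℝ)
    (G : EuclideanSpace ℝ (Fin m) → EuclideanSpace ℝ (Fin m))
    (hgrad : ∀ y, HasGradientAt φ (G y) y)
    (L : ℝ) (hLip : ∀ u v, ‖G u - G v‖ ≤ L * ‖u - v‖)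
    (γ ε : ℝ) (hγ : 0 < γ) (hε : 0 < ε)
    (ybar : EuclideanSpace ℝ (Fin m)) (hy : ybar ∈ unitSimplex m)
    (i j : Fin m) (hij : i ≠ j)
    (d : EuclideanSpace ℝ (Fin m))
    (hd : d = EuclideanSpace.single i (1 : ℝ) - EuclideanSpace.single j 1 ∨
          d = EuclideanSpace.single j (1 : ℝ) - EuclideanSpace.single i 1)
    (α : ℝ) (hα : 0 < α ∧ α ≤ ε)
    (hfail : φ (ybar + α • d) > φ ybar - γ * α ^ 2) :
    ⟪-G ybar, d⟫ < (2 * L + γ) * ε := by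
  obtain ⟨hα0, hαε⟩ := hα
  have hL : 0 ≤ L := by
    have h := hLip (EuclideanSpace.single i (1:ℝ)) 0
    have hn : ‖EuclideanSpace.single i (1:ℝ) - 0‖ = 1 := by
      simp [EuclideanSpace.norm_single]
    rw [hn, mul_one] at h
    exact (norm_nonneg _).trans h
  have hdnorm : ‖d‖ ^ 2 = 2 := by
    have : ∀ a b : Fin m, a ≠ b →
        ‖EuclideanSpace.single a (1:ℝ) - EuclideanSpace.single b 1‖ ^ 2 = 2 := by
      intro a b hab
      rw [← real_inner_self_eq_norm_sq]
      rw [inner_sub_sub_self]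
      simp [EuclideanSpace.inner_single_left, EuclideanSpace.single_apply, hab, hab.symm]
      ring
    rcases hd with h | h <;> rw [h]
    · exact this i j hij
    · exact this j i hij.symm
  have key := descent_aux φ G hgrad L hL hLip ybar (α • d)
  have hv2 : ‖α • d‖ ^ 2 = 2 * α ^ 2 := by
    rw [norm_smul]; rw [mul_pow]; rw [hdnorm]; simp [abs_sq]; ring
  have hinner : ⟪G ybar, α • d⟫ = α * ⟪G ybar, d⟫ := real_inner_smul_right _ _ _
  rw [hv2, hinner] at key
  -- from hfail: -γ α² < φ(ybar+αd) - φ ybar ≤ α⟪G,d⟫ + 2Lα²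
  have h1 : -(γ * α ^ 2) < α * ⟪G ybar, d⟫ + L * (2 * α ^ 2) := by linarith
  have h2 : ⟪-G ybar, d⟫ < (2 * L + γ) * α := by
    rw [inner_neg_left]
    have : α * (-⟪G ybar, d⟫) < α * ((2 * L + γ) * α) := by ring_nf; ring_nf at h1; linarith
    exact lt_of_mul_lt_mul_left this hα0.le
  calc ⟪-G ybar, d⟫ < (2 * L + γ) * α := h2
    _ ≤ (2 * L + γ) * ε := by
        apply mul_le_mul_of_nonneg_left hαε; positivity
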